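/- Let 𝒞 be the free category on the quiver with four vertices A, B, C, D and three arrows u : A → B, v : C → B, w : C → D, let W consist of all identities together with v, let W^{[1]} denote the class of levelwise W-morphisms in the arrow category 𝒞^{[1]}, and let diag : 𝒞^{[1]}[(W^{[1]})⁻¹] → (𝒞[W⁻¹])^{[1]} be the canonical functor induced by the two evaluation functors and the comparison of localizations. Then the object of (𝒞[W⁻¹])^{[1]} given by the composite morphism γ(w)∘γ(v)⁻¹∘γ(u) : A → D (where γ : 𝒞 → 𝒞[W⁻¹] is the localization functor) is not in the essential image of diag; in particular diag is not essentially surjective. -/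

import Mathlib

open CategoryTheory

namespace FreeZigzag

/-- The four vertices `A, B, C, D`. -/
inductive V : Type
  | A | B | C | D

/-- The three arrows `u : A ⟶ B`, `v : C ⟶ B` and `w : C ⟶ D`. -/
inductive E : V → V → Type
  | u : E .A .B
  | v : E .C .B
  | w : E .C .D

instance : Quiver V := ⟨E⟩

/-- The weak equivalences: all identities together with the arrow `v`. -/
inductive Wrel : ∀ {X Y : Paths V}, (X ⟶ Y) → Prop
  | id (X : Paths V) : Wrel (𝟙 X)
  | v : Wrel (Quiver.Hom.toPath E.v)

/-- The weak equivalences, as a morphism property of the free category on the quiver. -/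
def W : MorphismProperty (Paths V) := fun _ _ f => Wrel f

/-- The levelwise weak equivalences on the arrow category. -/
def Wsq : MorphismProperty (Arrow (Paths V)) := fun _ _ φ => W φ.left ∧ W φ.right

/-- A prefunctor to the poset ℕ distinguishing the iso classes. -/
def φ : Prefunctor V ℕ where
  obj x := match x with | .A => 0 | .B => 1 | .C => 1 | .D => 2
  map {X Y} e := match X, Y, e with
    | _, _, .u => homOfLE (by decide)
    | _, _, .v => homOfLE (by decide)
    | _, _, .w => homOfLE (by decide)

/-- The induced functor from the free category. -/
def F : Paths V ⥤ ℕ := Paths.lift φ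

theorem hF : W.IsInvertedBy F := by
  intro X Y f hf
  cases hf with
  | id X => infer_instance
  | v =>
      refine ⟨⟨homOfLE ?_, Subsingleton.elim _ _, Subsingleton.elim _ _⟩⟩
      show (1 : ℕ) ≤ 1
      omega

theorem noPathAD {X : V} (p : Quiver.Path X V.D) (hX : X = V.A) : False := by
  cases p with
  | nil => cases hX
  | cons q e =>
    change E _ _ at e
    cases e with
    | w =>
      cases q with
      | nil => cases hX
      | cons r e' => change E _ _ at e'; cases e'

theorem obj_eq_A {P : Paths V} (h : F.obj P = F.obj (V.A : V)) : P = (V.A : V) := by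
  cases (P : V) with
  | A => rfl
  | B => exact absurd h (by decide)
  | C => exact absurd h (by decide)
  | D => exact absurd h (by decide)

theorem obj_eq_D {P : Paths V} (h : F.obj P = F.obj (V.D : V)) : P = (V.D : V) := by
  cases (P : V) with
  | A => exact absurd h (by decide)
  | B => exact absurd h (by decide)
  | C => exact absurd h (by decide)
  | D => rfl

/-- With `𝒞` the free category on `u : A ⟶ B ⟵ C : v`, `w : C ⟶ D` and
`W` the identities together with `v`, let `L : 𝒞 ⥤ D` be a localization at `W`, let
`L₁ : 𝒞^[1] ⥤ D₁` be a localization of the arrow category at the levelwise weak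
equivalences, and let `diag : D₁ ⥤ D^[1]` be the canonical functor, i.e. any functor
commuting with the localization functors and the evaluation-induced functor
`𝒞^[1] ⥤ D^[1]`. Then the object `L(u) ≫ L(v)⁻¹ ≫ L(w) : A ⟶ D` of the arrow category
of the localization is not in the essential image of `diag`; in particular `diag` is not
essentially surjective. -/
theorem not_essSurj_diag
    {D : Type*} [Category D] (L : Paths V ⥤ D) [L.IsLocalization W]
    {D₁ : Type*} [Category D₁] (L₁ : Arrow (Paths V) ⥤ D₁) [L₁.IsLocalization Wsq]
    (diag : D₁ ⥤ Arrow D) (hdiag : L₁ ⋙ diag = L.mapArrow)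
    [IsIso (L.map (Quiver.Hom.toPath E.v))] :
    (¬ ∃ X : D₁, Nonempty (diag.obj X ≅
      Arrow.mk (L.map (Quiver.Hom.toPath E.u) ≫ inv (L.map (Quiver.Hom.toPath E.v)) ≫
        L.map (Quiver.Hom.toPath E.w)))) ∧
    ¬ diag.EssSurj := by
  have key : ¬ ∃ X : D₁, Nonempty (diag.obj X ≅
      Arrow.mk (L.map (Quiver.Hom.toPath E.u) ≫ inv (L.map (Quiver.Hom.toPath E.v)) ≫
        L.map (Quiver.Hom.toPath E.w))) := by
    rintro ⟨X, ⟨i⟩⟩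
    have hes : L₁.EssSurj := Localization.essSurj L₁ Wsq
    obtain ⟨a, ⟨e⟩⟩ := hes.mem_essImage X
    have j : L.mapArrow.obj a ≅ Arrow.mk (L.map (Quiver.Hom.toPath E.u) ≫
        inv (L.map (Quiver.Hom.toPath E.v)) ≫ L.map (Quiver.Hom.toPath E.w)) :=
      eqToIso (Functor.congr_obj hdiag a).symm ≪≫ diag.mapIso e ≪≫ i
    have jl : L.obj a.left ≅ L.obj (V.A : V) := Arrow.leftFunc.mapIso j
    have jr : L.obj a.right ≅ L.obj (V.D : V) := Arrow.rightFunc.mapIso j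
    set G := Localization.lift F hF L with hG
    have fac := Localization.fac F hF L
    have kl : F.obj a.left ≅ F.obj (V.A : V) :=
      (fac.app a.left).symm ≪≫ G.mapIso jl ≪≫ fac.app (V.A : V)
    have kr : F.obj a.right ≅ F.obj (V.D : V) :=
      (fac.app a.right).symm ≪≫ G.mapIso jr ≪≫ fac.app (V.D : V)
    have hl : a.left = (V.A : V) :=
      obj_eq_A (le_antisymm (leOfHom kl.hom) (leOfHom kl.inv))
    have hr : a.right = (V.D : V) :=
      obj_eq_D (le_antisymm (leOfHom kr.hom) (leOfHom kr.inv))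
    obtain ⟨l, r, f⟩ := a
    subst hr
    exact noPathAD f hl
  exact ⟨key, fun h => key ⟨_, ⟨diag.objObjPreimageIso _⟩⟩⟩

end FreeZigzag
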